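/- Let μ be a probability measure on a measurable space α, and let λ, η : α → ℝ be measurable. Let 0 ≤ Λ₁ ≤ 1 ≤ Λ₂ with Λ₁ < Λ₂, let Δ₁, Δ₂ ≥ 0 and m ∈ ℝ, and set τ := (Λ₂ − 1)/(Λ₂ − Λ₁). Assume Λ₁ ≤ λ(u) ≤ Λ₂ for μ-almost every u, ∫ λ dμ = 1, m − Δ₁ ≤ η(u) ≤ m + Δ₂ for μ-almost every u, and ∫ η dμ = m. Then ∫ η·λ dμ ≥ m − (Λ₂ − Λ₁)·min( (1 − τ)·Δ₁, τ·Δ₂ ). -/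

import Mathlib

open MeasureTheory

theorem eMSM_relaxed_lower_bound
    {α : Type*} [MeasurableSpace α] (μ : Measure α) [IsProbabilityMeasure μ]
    (lam η : α → ℝ) (hlam : Measurable lam) (hη : Measurable η)
    (Λ₁ Λ₂ Δ₁ Δ₂ m : ℝ)
    (hΛ₁0 : 0 ≤ Λ₁) (hΛ₁1 : Λ₁ ≤ 1) (hΛ₂1 : 1 ≤ Λ₂) (hΛlt : Λ₁ < Λ₂)
    (hΔ₁ : 0 ≤ Δ₁) (hΔ₂ : 0 ≤ Δ₂)
    (hlam_bd : ∀ᵐ u ∂μ, Λ₁ ≤ lam u ∧ lam u ≤ Λ₂)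
    (hlam_int : (∫ u, lam u ∂μ) = 1)
    (hη_bd : ∀ᵐ u ∂μ, m - Δ₁ ≤ η u ∧ η u ≤ m + Δ₂)
    (hη_int : (∫ u, η u ∂μ) = m) :
    m - (Λ₂ - Λ₁) *
        min ((1 - (Λ₂ - 1) / (Λ₂ - Λ₁)) * Δ₁) (((Λ₂ - 1) / (Λ₂ - Λ₁)) * Δ₂) ≤
      ∫ u, η u * lam u ∂μ := by
  have hne : Λ₂ - Λ₁ ≠ 0 := sub_ne_zero.mpr hΛlt.ne'
  set C : ℝ := max |m - Δ₁| |m + Δ₂| with hC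
  have hηbd' : ∀ᵐ u ∂μ, ‖η u‖ ≤ C := by
    filter_upwards [hη_bd] with u hu
    rw [Real.norm_eq_abs, abs_le]
    constructor
    · have := neg_abs_le (m - Δ₁)
      have := le_max_left |m - Δ₁| |m + Δ₂|
      linarith [hu.1]
    · have := le_abs_self (m + Δ₂)
      have := le_max_right |m - Δ₁| |m + Δ₂|
      linarith [hu.2]
  have hlambd' : ∀ᵐ u ∂μ, ‖lam u‖ ≤ Λ₂ := by
    filter_upwards [hlam_bd] with u hu
    rw [Real.norm_eq_abs, abs_le]
    exact ⟨by linarith [hu.1], hu.2⟩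
  have hη_i : Integrable η μ :=
    (integrable_const C).mono' hη.aestronglyMeasurable hηbd'
  have hlam_i : Integrable lam μ :=
    (integrable_const Λ₂).mono' hlam.aestronglyMeasurable hlambd'
  have hprod_i : Integrable (fun u => η u * lam u) μ := by
    refine (integrable_const (C * Λ₂)).mono'
      (hη.mul hlam).aestronglyMeasurable ?_
    filter_upwards [hηbd', hlambd'] with u h1 h2
    rw [norm_mul]
    exact mul_le_mul h1 h2 (norm_nonneg _) ((norm_nonneg _).trans h1)
  -- Bound 1 : ∫ηλ - m ≥ (Λ₁ - 1) * Δ₁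
  have hb1 : m + (Λ₁ - 1) * Δ₁ ≤ ∫ u, η u * lam u ∂μ := by
    have key : ∫ u, (η u - (m - Δ₁)) * (lam u - 1) ∂μ
        = (∫ u, η u * lam u ∂μ) - m := by
      have heq : (fun u => (η u - (m - Δ₁)) * (lam u - 1))
          = fun u => (η u * lam u - η u) - ((m - Δ₁) * lam u - (m - Δ₁)) := by
        funext u; ring
      have iA : Integrable (fun u => η u * lam u - η u) μ := hprod_i.sub hη_i
      have iB : Integrable (fun u => (m - Δ₁) * lam u - (m - Δ₁)) μ :=
        (hlam_i.const_mul _).sub (integrable_const _)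
      have iB1 : Integrable (fun u => (m - Δ₁) * lam u) μ := hlam_i.const_mul _
      rw [heq, integral_sub iA iB,
        integral_sub hprod_i hη_i,
        integral_sub iB1 (integrable_const _),
        integral_const_mul, hη_int, hlam_int, integral_const]
      simp only [measure_univ, probReal_univ, ENNReal.toReal_one, smul_eq_mul, one_mul, mul_one]
      ring
    have mono : ∫ u, (Λ₁ - 1) * (η u - (m - Δ₁)) ∂μ
        ≤ ∫ u, (η u - (m - Δ₁)) * (lam u - 1) ∂μ := by
      have iA : Integrable (fun u => η u * lam u - η u) μ := hprod_i.sub hη_i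
      have iB : Integrable (fun u => (m - Δ₁) * lam u - (m - Δ₁)) μ :=
        (hlam_i.const_mul _).sub (integrable_const _)
      have iP : Integrable (fun u => (η u - (m - Δ₁)) * (lam u - 1)) μ := by
        refine (iA.sub iB).congr ?_
        filter_upwards with u
        simp only [Pi.sub_apply]; ring
      refine integral_mono_ae ((hη_i.sub (integrable_const _)).const_mul _) iP ?_
      filter_upwards [hη_bd, hlam_bd] with u h1 h2
      have hx : 0 ≤ η u - (m - Δ₁) := by linarith [h1.1]
      have h3 : (η u - (m - Δ₁)) * (Λ₁ - 1) ≤ (η u - (m - Δ₁)) * (lam u - 1) :=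
        mul_le_mul_of_nonneg_left (by linarith [h2.1]) hx
      linarith [h3]
    have val : ∫ u, (Λ₁ - 1) * (η u - (m - Δ₁)) ∂μ = (Λ₁ - 1) * Δ₁ := by
      rw [integral_const_mul, integral_sub hη_i (integrable_const _),
        hη_int, integral_const]
      simp only [measure_univ, probReal_univ, ENNReal.toReal_one, smul_eq_mul, one_mul, mul_one]
      ring
    rw [val, key] at mono
    linarith
  -- Bound 2 : ∫ηλ - m ≥ (1 - Λ₂) * Δ₂
  have hb2 : m + (1 - Λ₂) * Δ₂ ≤ ∫ u, η u * lam u ∂μ := by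
    have key : ∫ u, ((m + Δ₂) - η u) * (1 - lam u) ∂μ
        = (∫ u, η u * lam u ∂μ) - m := by
      have heq : (fun u => ((m + Δ₂) - η u) * (1 - lam u))
          = fun u => (η u * lam u - η u) - ((m + Δ₂) * lam u - (m + Δ₂)) := by
        funext u; ring
      have iA : Integrable (fun u => η u * lam u - η u) μ := hprod_i.sub hη_i
      have iB : Integrable (fun u => (m + Δ₂) * lam u - (m + Δ₂)) μ :=
        (hlam_i.const_mul _).sub (integrable_const _)
      have iB1 : Integrable (fun u => (m + Δ₂) * lam u) μ := hlam_i.const_mul _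
      rw [heq, integral_sub iA iB,
        integral_sub hprod_i hη_i,
        integral_sub iB1 (integrable_const _),
        integral_const_mul, hη_int, hlam_int, integral_const]
      simp only [measure_univ, probReal_univ, ENNReal.toReal_one, smul_eq_mul, one_mul, mul_one]
      ring
    have mono : ∫ u, (1 - Λ₂) * ((m + Δ₂) - η u) ∂μ
        ≤ ∫ u, ((m + Δ₂) - η u) * (1 - lam u) ∂μ := by
      have iA : Integrable (fun u => η u * lam u - η u) μ := hprod_i.sub hη_i
      have iB : Integrable (fun u => (m + Δ₂) * lam u - (m + Δ₂)) μ :=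
        (hlam_i.const_mul _).sub (integrable_const _)
      have iP : Integrable (fun u => ((m + Δ₂) - η u) * (1 - lam u)) μ := by
        refine (iA.sub iB).congr ?_
        filter_upwards with u
        simp only [Pi.sub_apply]; ring
      refine integral_mono_ae (((integrable_const _).sub hη_i).const_mul _) iP ?_
      filter_upwards [hη_bd, hlam_bd] with u h1 h2
      have hx : 0 ≤ (m + Δ₂) - η u := by linarith [h1.2]
      have h3 : ((m + Δ₂) - η u) * (1 - Λ₂) ≤ ((m + Δ₂) - η u) * (1 - lam u) :=
        mul_le_mul_of_nonneg_left (by linarith [h2.2]) hx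
      linarith [h3]
    have val : ∫ u, (1 - Λ₂) * ((m + Δ₂) - η u) ∂μ = (1 - Λ₂) * Δ₂ := by
      rw [integral_const_mul, integral_sub (integrable_const _) hη_i,
        hη_int, integral_const]
      simp only [measure_univ, probReal_univ, ENNReal.toReal_one, smul_eq_mul, one_mul, mul_one]
      ring
    rw [val, key] at mono
    linarith
  rcases min_cases ((1 - (Λ₂ - 1) / (Λ₂ - Λ₁)) * Δ₁) (((Λ₂ - 1) / (Λ₂ - Λ₁)) * Δ₂)
    with ⟨hmin, _⟩ | ⟨hmin, _⟩
  · rw [hmin]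
    have : (Λ₂ - Λ₁) * ((1 - (Λ₂ - 1) / (Λ₂ - Λ₁)) * Δ₁) = (1 - Λ₁) * Δ₁ := by
      field_simp
      try ring
    rw [this]; linarith
  · rw [hmin]
    have : (Λ₂ - Λ₁) * (((Λ₂ - 1) / (Λ₂ - Λ₁)) * Δ₂) = (Λ₂ - 1) * Δ₂ := by
      field_simp
    rw [this]; linarith
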